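/- Let a < b, let g : [a,b] → ℝ be a convex Lebesgue integrable function, and let f : [a,b] → ℝ be a Lebesgue integrable g-convex dominated function. Then |f((a+b)/2) − (1/(b−a)) ∫_a^b f(x) dx| ≤ (1/(b−a)) ∫_a^b g(x) dx − g((a+b)/2). -/

import Mathlib

open MeasureTheory Set

theorem stmt11 (a b : ℝ) (hab : a < b) (f g : ℝ → ℝ)
    (hgconv : ConvexOn ℝ (Set.Icc a b) g)
    (hgint : IntegrableOn g (Set.Icc a b))
    (hfint : IntegrableOn f (Set.Icc a b))
    (hfdom : ∀ x ∈ Set.Icc a b, ∀ y ∈ Set.Icc a b, ∀ l ∈ Set.Icc (0:ℝ) 1,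
      |l * f x + (1 - l) * f y - f (l * x + (1 - l) * y)| ≤
        l * g x + (1 - l) * g y - g (l * x + (1 - l) * y)) :
    |f ((a + b) / 2) - (1 / (b - a)) * ∫ x in a..b, f x| ≤
      (1 / (b - a)) * ∫ x in a..b, g x - g ((a + b) / 2) := by
  set m := (a + b) / 2 with hm
  have hab' : a ≤ b := hab.le
  -- interval integrability
  have hfI : IntervalIntegrable f volume a b := by
    rw [intervalIntegrable_iff_integrableOn_Ioc_of_le hab']
    exact hfint.mono_set Ioc_subset_Icc_self
  have hgI : IntervalIntegrable g volume a b := by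
    rw [intervalIntegrable_iff_integrableOn_Ioc_of_le hab']
    exact hgint.mono_set Ioc_subset_Icc_self
  have hfI' : IntervalIntegrable (fun x => f (a + b - x)) volume a b := by
    simpa using (hfI.comp_sub_left (a + b)).symm
  have hgI' : IntervalIntegrable (fun x => g (a + b - x)) volume a b := by
    simpa using (hgI.comp_sub_left (a + b)).symm
  set F : ℝ → ℝ := fun x => (1:ℝ)/2 * f x + (1 - (1:ℝ)/2) * f (a + b - x) - f m with hF
  set G : ℝ → ℝ := fun x => (1:ℝ)/2 * g x + (1 - (1:ℝ)/2) * g (a + b - x) - g m with hG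
  have hFI : IntervalIntegrable F volume a b :=
    ((hfI.const_mul _).add (hfI'.const_mul _)).sub intervalIntegrable_const
  have hGI : IntervalIntegrable G volume a b :=
    ((hgI.const_mul _).add (hgI'.const_mul _)).sub intervalIntegrable_const
  -- pointwise bound
  have key : ∀ x ∈ Icc a b, |F x| ≤ G x := by
    intro x hx
    have hx' : a + b - x ∈ Icc a b := by
      constructor
      · linarith [hx.2]
      · linarith [hx.1]
    have h := hfdom x hx (a + b - x) hx' ((1:ℝ)/2) (by norm_num)
    have hmid : (1:ℝ)/2 * x + (1 - (1:ℝ)/2) * (a + b - x) = m := by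
      rw [hm]; ring
    rw [hmid] at h
    exact h
  -- integral bound
  have habs : |∫ x in a..b, F x| ≤ ∫ x in a..b, G x :=
    (intervalIntegral.abs_integral_le_integral_abs hab').trans
      (intervalIntegral.integral_mono_on hab' hFI.abs hGI key)
  -- compute integrals
  have hrefl_f : (∫ x in a..b, f (a + b - x)) = ∫ x in a..b, f x := by
    rw [intervalIntegral.integral_comp_sub_left f (a + b)]
    norm_num
  have hrefl_g : (∫ x in a..b, g (a + b - x)) = ∫ x in a..b, g x := by
    rw [intervalIntegral.integral_comp_sub_left g (a + b)]
    norm_num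
  have hFint : (∫ x in a..b, F x) = (∫ x in a..b, f x) - (b - a) * f m := by
    rw [hF]
    rw [intervalIntegral.integral_sub ((hfI.const_mul _).add (hfI'.const_mul _))
      intervalIntegrable_const,
      intervalIntegral.integral_add (hfI.const_mul _) (hfI'.const_mul _),
      intervalIntegral.integral_const_mul, intervalIntegral.integral_const_mul,
      intervalIntegral.integral_const, hrefl_f]
    ring_nf
  have hGint : (∫ x in a..b, G x) = (∫ x in a..b, g x) - (b - a) * g m := by
    rw [hG]
    rw [intervalIntegral.integral_sub ((hgI.const_mul _).add (hgI'.const_mul _))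
      intervalIntegrable_const,
      intervalIntegral.integral_add (hgI.const_mul _) (hgI'.const_mul _),
      intervalIntegral.integral_const_mul, intervalIntegral.integral_const_mul,
      intervalIntegral.integral_const, hrefl_g]
    ring_nf
  have hRHS : (∫ x in a..b, g x - g m) = (∫ x in a..b, g x) - (b - a) * g m := by
    rw [intervalIntegral.integral_sub hgI intervalIntegrable_const,
      intervalIntegral.integral_const, smul_eq_mul, mul_comm]
  rw [hFint, hGint] at habs
  have hba : (0:ℝ) < b - a := by linarith
  rw [hRHS]
  have h1 : |f m - 1 / (b - a) * ∫ x in a..b, f x|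
      = 1 / (b - a) * |(∫ x in a..b, f x) - (b - a) * f m| := by
    have e : f m - 1 / (b - a) * ∫ x in a..b, f x
        = 1 / (b - a) * ((b - a) * f m - ∫ x in a..b, f x) := by
      field_simp
    rw [e, abs_mul, abs_of_pos (show (0:ℝ) < 1 / (b - a) by positivity), abs_sub_comm]
  rw [h1]
  have := mul_le_mul_of_nonneg_left habs (le_of_lt (show (0:ℝ) < 1 / (b - a) by positivity))
  exact this
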